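/- There exist constants c₁, c₂ > 0 and ε₀ ∈ (0,1/2) such that for every ε ∈ (0, ε₀]: (i) for every p ∈ (0,1], p + hc(ε/p) ≥ c₁·√(h(ε)); and (ii) there exists p ∈ (0,1] with p + hc(ε/p) ≤ c₂·√(h(ε)). -/

import Mathlib

/-- The base-2 binary entropy function, with the convention `0 * log 0 = 0`. -/
noncomputable def binEnt (x : ℝ) : ℝ :=
  -(x * Real.logb 2 x) - (1 - x) * Real.logb 2 (1 - x)

/-- The truncated binary entropy `hc(x) = h(min(x, 1/2))`. -/
noncomputable def hc (x : ℝ) : ℝ := binEnt (min x (1 / 2))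

open Real

lemma binEnt_eq (x : ℝ) : binEnt x = Real.binEntropy x / Real.log 2 := by
  simp only [binEnt, Real.binEntropy, Real.logb, Real.log_inv]
  ring

lemma log2_pos : 0 < Real.log 2 := Real.log_pos one_lt_two

lemma binEnt_nonneg {x : ℝ} (h0 : 0 ≤ x) (h1 : x ≤ 1) : 0 ≤ binEnt x := by
  rw [binEnt_eq]
  exact div_nonneg (binEntropy_nonneg h0 h1) log2_pos.le

lemma binEnt_le_one (x : ℝ) : binEnt x ≤ 1 := by
  rw [binEnt_eq, div_le_one log2_pos]
  exact binEntropy_le_log_two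

lemma binEnt_mono {x y : ℝ} (h0 : 0 ≤ x) (hxy : x ≤ y) (hy : y ≤ 1 / 2) :
    binEnt x ≤ binEnt y := by
  rw [binEnt_eq, binEnt_eq]
  apply div_le_div_of_nonneg_right ?_ log2_pos.le
  exact binEntropy_strictMonoOn.monotoneOn
      ⟨h0, by norm_num; linarith⟩ ⟨by linarith, by norm_num; linarith⟩ hxy

lemma hc_mono {x y : ℝ} (h0 : 0 ≤ x) (hxy : x ≤ y) : hc x ≤ hc y := by
  unfold hc
  exact binEnt_mono (le_min h0 (by norm_num)) (min_le_min_right _ hxy) (min_le_right _ _)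

lemma binEnt_half : binEnt (1 / 2) = 1 := by
  rw [binEnt_eq, show (1:ℝ)/2 = 2⁻¹ by norm_num, Real.binEntropy_two_inv]
  exact div_self (ne_of_gt log2_pos)

lemma hc_nonneg {x : ℝ} (h0 : 0 ≤ x) : 0 ≤ hc x :=
  binEnt_nonneg (le_min h0 (by norm_num)) (by have := min_le_right x (1/2); linarith)

lemma binEnt_lower {x : ℝ} (h0 : 0 ≤ x) (h1 : x ≤ 1) : -(x * Real.logb 2 x) ≤ binEnt x := by
  unfold binEnt
  have : Real.logb 2 (1 - x) ≤ 0 := by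
    rcases eq_or_lt_of_le h1 with h | h
    · simp [← h]
    · exact Real.logb_nonpos one_lt_two (by linarith) (by linarith)
  nlinarith

lemma binEnt_upper {x : ℝ} (h0 : 0 ≤ x) (h1 : x ≤ 1) :
    binEnt x ≤ -(x * Real.logb 2 x) + 2 * x := by
  unfold binEnt
  have key : -((1 - x) * Real.logb 2 (1 - x)) ≤ 2 * x := by
    rcases eq_or_lt_of_le h1 with h | h
    · simp [h]
    · have hy : 0 < 1 - x := by linarith
      have hlog : Real.log (1 - x)⁻¹ ≤ (1 - x)⁻¹ - 1 :=
        Real.log_le_sub_one_of_pos (by positivity)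
      rw [Real.log_inv] at hlog
      have h2 : -((1 - x) * Real.log (1 - x)) ≤ x := by
        have := mul_le_mul_of_nonneg_left hlog hy.le
        have hx : (1 - x) * ((1 - x)⁻¹ - 1) = x := by field_simp; ring
        nlinarith
      have hl2 : (1/2 : ℝ) ≤ Real.log 2 := by
        have := Real.log_two_gt_d9; linarith
      have heq : -((1 - x) * Real.logb 2 (1 - x))
          = (-((1 - x) * Real.log (1 - x))) / Real.log 2 := by
        rw [Real.logb]; ring
      rw [heq]
      rw [div_le_iff₀ log2_pos]
      nlinarith
  linarith

/-- The minimum of `p + hc(ε/p)` over `p ∈ (0,1]` has order `√(h(ε))`: there are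
`c₁, c₂ > 0` and `ε₀ ∈ (0,1/2)` such that for all `ε ∈ (0,ε₀]`, every `p ∈ (0,1]`
satisfies `p + hc(ε/p) ≥ c₁·√(h(ε))`, while some `p ∈ (0,1]` satisfies
`p + hc(ε/p) ≤ c₂·√(h(ε))`. -/
theorem stmt_17 :
    ∃ c₁ c₂ ε₀ : ℝ, 0 < c₁ ∧ 0 < c₂ ∧ 0 < ε₀ ∧ ε₀ < 1 / 2 ∧
      ∀ ε : ℝ, 0 < ε → ε ≤ ε₀ →
        (∀ p : ℝ, 0 < p → p ≤ 1 → c₁ * Real.sqrt (binEnt ε) ≤ p + hc (ε / p)) ∧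
        (∃ p : ℝ, 0 < p ∧ p ≤ 1 ∧ p + hc (ε / p) ≤ c₂ * Real.sqrt (binEnt ε)) := by
  refine ⟨1/4, 3, 1/256, by norm_num, by norm_num, by norm_num, by norm_num, ?_⟩
  intro ε hε hε0
  have hε1 : ε ≤ 1 := by linarith
  set L : ℝ := -Real.logb 2 ε with hL
  clear_value L
  have h256 : Real.logb 2 (1/256 : ℝ) = -8 := by
    rw [show (1/256:ℝ) = ((2:ℝ)^(8:ℕ))⁻¹ by norm_num, Real.logb_inv, Real.logb_pow,
      Real.logb_self_eq_one one_lt_two]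
    norm_num
  have hL8 : 8 ≤ L := by
    have hmon : Real.logb 2 ε ≤ Real.logb 2 (1/256) :=
      Real.logb_le_logb_of_le one_lt_two hε hε0
    rw [h256] at hmon
    rw [hL]; linarith
  have hELeq : ε * L = -(ε * Real.logb 2 ε) := by rw [hL]; ring
  have hEL : ε * L ≤ binEnt ε := by
    rw [hELeq]; exact binEnt_lower hε.le hε1
  have hH2 : binEnt ε ≤ 2 * (ε * L) := by
    have := binEnt_upper hε.le hε1
    nlinarith
  have hHpos : 0 < binEnt ε := lt_of_lt_of_le (by nlinarith) hEL
  set s := Real.sqrt (binEnt ε) with hs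
  clear_value s
  have hs2 : s^2 = binEnt ε := by rw [hs]; exact Real.sq_sqrt hHpos.le
  have hspos : 0 < s := by rw [hs]; exact Real.sqrt_pos.mpr hHpos
  have hs1 : s ≤ 1 := by
    rw [hs, show (1:ℝ) = Real.sqrt 1 by simp]
    exact Real.sqrt_le_sqrt (binEnt_le_one ε)
  have hsqeL : Real.sqrt (8*ε) ≤ s := by
    rw [hs]
    exact Real.sqrt_le_sqrt (by nlinarith)
  constructor
  · -- lower bound
    intro p hp hp1
    rcases le_or_gt (s/4) p with hcase | hcase
    · have h0 := hc_nonneg (show 0 ≤ ε/p by positivity)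
      linarith
    · set u := 4*ε/s with hu
      clear_value u
      have hupos : 0 < u := by rw [hu]; positivity
      have hule : u ≤ ε / p := by
        rw [hu, div_le_div_iff₀ hspos hp]
        nlinarith
      have hmono := hc_mono hupos.le hule
      rcases le_or_gt (1/2 : ℝ) u with hu2 | hu2
      · have hcu : hc u = 1 := by rw [hc, min_eq_right hu2, binEnt_half]
        rw [hcu] at hmono
        linarith
      · have hhcu : hc u = binEnt u := by rw [hc, min_eq_left hu2.le]
        have hlow := binEnt_lower hupos.le (by linarith)
        -- logb 2 (1/u) ≥ L/2 - 1
        have hsq : 0 < Real.sqrt ε := Real.sqrt_pos.mpr hε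
        have hstep : 1/(2*Real.sqrt ε) ≤ s/(4*ε) := by
          have h4 : Real.sqrt (4*ε) = 2*Real.sqrt ε := by
            rw [show (4:ℝ)*ε = 2^2*ε by norm_num, Real.sqrt_mul (by positivity),
              Real.sqrt_sq (by norm_num)]
          have h2s : 2*Real.sqrt ε ≤ s := by
            rw [← h4]
            exact le_trans (Real.sqrt_le_sqrt (by linarith)) hsqeL
          have hεs : Real.sqrt ε * Real.sqrt ε = ε := Real.mul_self_sqrt hε.le
          rw [div_le_div_iff₀ (by positivity) (by positivity)]
          nlinarith [mul_le_mul_of_nonneg_left h2s (by positivity : (0:ℝ) ≤ 2*Real.sqrt ε)]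
        have hlogval : Real.logb 2 (1/(2*Real.sqrt ε)) = L/2 - 1 := by
          rw [one_div, Real.logb_inv, Real.logb_mul two_ne_zero (by positivity),
            Real.logb_self_eq_one one_lt_two]
          have hls : Real.logb 2 (Real.sqrt ε) = Real.logb 2 ε / 2 := by
            rw [Real.logb, Real.log_sqrt hε.le, Real.logb]; ring
          rw [hls, hL]; ring
        have hinv : u⁻¹ = s/(4*ε) := by rw [hu, inv_div]
        have hlogu : L/2 - 1 ≤ Real.logb 2 u⁻¹ := by
          rw [hinv, ← hlogval]
          exact Real.logb_le_logb_of_le one_lt_two (by positivity) hstep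
        rw [Real.logb_inv] at hlogu
        -- hc u ≥ u * (L/2 - 1)
        have hkey : u * (L/2 - 1) ≤ hc u := by
          rw [hhcu]
          calc u * (L/2-1) ≤ u * (-Real.logb 2 u) :=
                mul_le_mul_of_nonneg_left hlogu hupos.le
            _ = -(u * Real.logb 2 u) := by ring
            _ ≤ binEnt u := hlow
        have hfin : 1/4 * s ≤ u * (L/2 - 1) := by
          rw [hu, show 4*ε/s*(L/2-1) = (4*ε*(L/2-1))/s by ring, le_div_iff₀ hspos]
          nlinarith [hs2, hH2, hL8, hε]
        linarith
  · -- upper bound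
    refine ⟨s, hspos, hs1, ?_⟩
    set t := ε / s with ht
    clear_value t
    have htpos : 0 < t := by rw [ht]; positivity
    have hts : t * s = ε := by rw [ht]; field_simp
    have ht2 : t ≤ 1/2 := by
      rw [ht, div_le_iff₀ hspos]
      have h2e : 2*ε ≤ Real.sqrt (8*ε) := by
        rw [show (2:ℝ)*ε = Real.sqrt ((2*ε)^2) by rw [Real.sqrt_sq (by positivity)]]
        exact Real.sqrt_le_sqrt (by nlinarith)
      nlinarith
    have htl : ε ≤ t := by
      rw [ht, le_div_iff₀ hspos]
      exact mul_le_of_le_one_right hε.le hs1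
    have hhct : hc t = binEnt t := by rw [hc, min_eq_left ht2]
    have hub := binEnt_upper htpos.le (by linarith : t ≤ 1)
    have hlogt : -Real.logb 2 t ≤ L := by
      rw [hL]
      have := Real.logb_le_logb_of_le one_lt_two hε htl
      linarith
    have hbt : binEnt t ≤ 2 * (t * L) := by
      have h1 : -(t * Real.logb 2 t) ≤ t * L := by
        calc -(t * Real.logb 2 t) = t * (-Real.logb 2 t) := by ring
          _ ≤ t * L := mul_le_mul_of_nonneg_left hlogt htpos.le
      have h2 : 2 * t ≤ t * L :=
        le_trans (by linarith [mul_le_mul_of_nonneg_left (show (2:ℝ) ≤ L by linarith) htpos.le]) le_rfl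
      linarith
    have htLs : t * L ≤ s := by
      have h1 : (t * L) * s ≤ s * s := by
        calc (t * L) * s = ε * L := by rw [← hts]; ring
          _ ≤ binEnt ε := hEL
          _ = s * s := by rw [← hs2]; ring
      exact le_of_mul_le_mul_right h1 hspos
    rw [hhct]
    linarith
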